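/- Quantitative substitution: if Γ, x:T ⊢ t : G is derivable with derivation π_t and ⊢ u : T is derivable with derivation π_u (u closed), then Γ ⊢ t{x := u} : G is derivable with a derivation of size |π_t| + |π_u| − length(leaves(T)). -/

import Mathlib

/-! # Tree intersection types -/

mutual
/-- Linear types: `A ::= ⋆ | T → A`. -/
inductive LinTy : Type where
  | star : LinTy
  | arr : TreeTy → LinTy → LinTy
/-- Generic types: linear types or tree types. -/
inductive GenTy : Type where
  | lin : LinTy → GenTy
  | tree : TreeTy → GenTy
/-- Tree types: finite sequences of generic types. -/
inductive TreeTy : Type where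
  | node : List GenTy → TreeTy
end

mutual
/-- Leaves of a generic type. -/
def GenTy.leaves : GenTy → List LinTy
  | .lin A => [A]
  | .tree T => TreeTy.leaves T
  termination_by g => sizeOf g
/-- Leaves extraction on tree types. -/
def TreeTy.leaves : TreeTy → List LinTy
  | .node gs => gs.attach.flatMap (fun g => GenTy.leaves g.1)
  termination_by T => sizeOf T
  decreasing_by simp_wf; have := List.sizeOf_lt_of_mem g.2; omega
end

/-- Concatenation `⊎` of tree types (sequences). -/
def TreeTy.cat : TreeTy → TreeTy → TreeTy
  | .node a, .node b => .node (a ++ b)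

mutual
/-- Weight (size) of a linear type, with parameter `X`. -/
def LinTy.weight (X : ℕ) : LinTy → ℕ
  | .star => 0
  | .arr T A => max (TreeTy.weight X T) (LinTy.weight X A + 1)
  termination_by A => sizeOf A
def GenTy.weight (X : ℕ) : GenTy → ℕ
  | .lin A => LinTy.weight X A
  | .tree T => TreeTy.weight X T
  termination_by g => sizeOf g
def TreeTy.weight (X : ℕ) : TreeTy → ℕ
  | .node gs => X + (gs.attach.map (fun g => GenTy.weight X g.1)).foldr max 0
  termination_by T => sizeOf T
  decreasing_by simp_wf; have := List.sizeOf_lt_of_mem g.2; omega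
end

mutual
/-- Hereditary absence of empty sequences (every leaf context ends in `⋆`). -/
inductive LinTy.Good : LinTy → Prop where
  | star : LinTy.Good .star
  | arr {T A} : TreeTy.Good T → LinTy.Good A → LinTy.Good (.arr T A)
inductive GenTy.Good : GenTy → Prop where
  | lin {A} : LinTy.Good A → GenTy.Good (.lin A)
  | tree {T} : TreeTy.Good T → GenTy.Good (.tree T)
inductive TreeTy.Good : TreeTy → Prop where
  | node {gs : List GenTy} : gs ≠ [] → (∀ g ∈ gs, GenTy.Good g) → TreeTy.Good (.node gs)
end

/-! ## Leaf contexts -/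

/-- One-hole contexts into tree types whose hole sits at a leaf position. -/
inductive LeafCtx : Type where
  | here (l r : List GenTy) : LeafCtx
  | deeper (l : List GenTy) (L : LeafCtx) (r : List GenTy) : LeafCtx

/-- Plugging a linear type into a leaf context. -/
def LeafCtx.plug : LeafCtx → LinTy → TreeTy
  | .here l r, A => .node (l ++ .lin A :: r)
  | .deeper l L r, A => .node (l ++ .tree (L.plug A) :: r)

/-- Number of leaves strictly to the left of the hole. -/
def LeafCtx.holeIdx : LeafCtx → ℕ
  | .here l _ => (TreeTy.node l).leaves.length
  | .deeper l L _ => (TreeTy.node l).leaves.length + L.holeIdx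

/-! ## Type contexts -/

mutual
/-- Linear type contexts: `𝕃c ::= ⟨·⟩ | T → 𝕃c | 𝕋 → A`. -/
inductive LinCtx : Type where
  | hole : LinCtx
  | arrR : TreeTy → LinCtx → LinCtx
  | arrL : TreeCtx → LinTy → LinCtx
/-- Tree type contexts. -/
inductive TreeCtx : Type where
  | node : List GenTy → GenCtx → List GenTy → TreeCtx
/-- Generic type contexts. -/
inductive GenCtx : Type where
  | lin : LinCtx → GenCtx
  | tree : TreeCtx → GenCtx
end

mutual
def LinCtx.plug : LinCtx → LinTy → LinTy
  | .hole, B => B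
  | .arrR T C, B => .arr T (C.plug B)
  | .arrL C A, B => .arr (C.plug B) A
def TreeCtx.plug : TreeCtx → LinTy → TreeTy
  | .node l C r, B => .node (l ++ C.plug B :: r)
def GenCtx.plug : GenCtx → LinTy → GenTy
  | .lin C, B => .lin (C.plug B)
  | .tree C, B => .tree (C.plug B)
end

mutual
/-- Branch size of a linear type context. -/
def LinCtx.bsize (X : ℕ) : LinCtx → ℕ
  | .hole => 0
  | .arrR _ C => 1 + C.bsize X
  | .arrL C _ => C.bsize X
def TreeCtx.bsize (X : ℕ) : TreeCtx → ℕ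
  | .node _ C _ => X + C.bsize X
def GenCtx.bsize (X : ℕ) : GenCtx → ℕ
  | .lin C => C.bsize X
  | .tree C => C.bsize X
end

/-! # λ-terms (de Bruijn) and Closed Call-by-Name -/

inductive Term : Type where
  | var : ℕ → Term
  | lam : Term → Term
  | app : Term → Term → Term

/-- Shifting of free indices `≥ c` by `d`. -/
def Term.lift (d : ℕ) : ℕ → Term → Term
  | c, .var n => if n < c then .var n else .var (n + d)
  | c, .lam t => .lam (Term.lift d (c+1) t)
  | c, .app t u => .app (Term.lift d c t) (Term.lift d c u)

/-- Capture-avoiding substitution of `u` for index `k`. -/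
def Term.subst (u : Term) : ℕ → Term → Term
  | k, .var n => if n = k then Term.lift k 0 u else if k < n then .var (n-1) else .var n
  | k, .lam t => .lam (Term.subst u (k+1) t)
  | k, .app t s => .app (Term.subst u k t) (Term.subst u k s)

/-- `t{x₀ := u}`. -/
def Term.subst0 (t u : Term) : Term := Term.subst u 0 t

def Term.ClosedUnder : Term → ℕ → Prop
  | .var n, k => n < k
  | .lam t, k => t.ClosedUnder (k+1)
  | .app t u, k => t.ClosedUnder k ∧ u.ClosedUnder k

/-- Closed terms: no free variables. -/
def Term.Closed (t : Term) : Prop := t.ClosedUnder 0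

/-- Occurrence of a free variable. -/
def Term.FreeIn : Term → ℕ → Prop
  | .var n, x => n = x
  | .lam t, x => t.FreeIn (x+1)
  | .app t u, x => t.FreeIn x ∨ u.FreeIn x

/-- Weak head reduction `(λy.t)u r₁…r_h →wh t{y:=u} r₁…r_h`. -/
inductive Whr : Term → Term → Prop where
  | beta (t u : Term) : Whr (.app (.lam t) u) (t.subst0 u)
  | appL {t t' : Term} (u : Term) : Whr t t' → Whr (.app t u) (.app t' u)

/-- `n`-step weak head reduction. -/
inductive WhN : ℕ → Term → Term → Prop where
  | refl (t : Term) : WhN 0 t t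
  | step {n t u v} : Whr t u → WhN n u v → WhN (n+1) t v

/-! # Type environments and the tree type system -/

/-- Type environments: maps from (de Bruijn) variables to tree types. -/
def Env : Type := ℕ → TreeTy

def Env.empty : Env := fun _ => .node []

/-- Pointwise concatenation `Γ ⊎ Δ`. -/
def Env.union (Γ Δ : Env) : Env := fun x => (Γ x).cat (Δ x)

/-- Environment of the variable axiom: `x : [A]`. -/
def Env.single (x : ℕ) (A : LinTy) : Env :=
  fun y => if y = x then .node [.lin A] else .node []

/-- Environment extension `Γ, x₀:T` (de Bruijn cons). -/
def Env.cons (T : TreeTy) (Γ : Env) : Env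
  | 0 => T
  | n+1 => Γ n

/-- Wrap a (non-empty) tree type in one extra sequence layer. -/
def TreeTy.wrap : TreeTy → TreeTy
  | .node [] => .node []
  | T => .node [.tree T]

/-- `[Γ]`: wrap each (non-empty) type of the environment in one extra layer. -/
def Env.wrap (Γ : Env) : Env := fun x => (Γ x).wrap

/-- Finite union of environments. -/
def Env.unionF {n : ℕ} (Γs : Fin n → Env) : Env :=
  (List.ofFn Γs).foldr Env.union Env.empty

/-- Tree type derivations. -/
inductive Deriv : Env → Term → GenTy → Type where
  | var (x : ℕ) (A : LinTy) : Deriv (Env.single x A) (.var x) (.lin A)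
  | lam {Γ : Env} {T : TreeTy} {t : Term} {A : LinTy} :
      Deriv (Env.cons T Γ) t (.lin A) → Deriv Γ (.lam t) (.lin (.arr T A))
  | lamStar (t : Term) : Deriv Env.empty (.lam t) (.lin .star)
  | app {Γ Δ : Env} {t u : Term} {T : TreeTy} {A : LinTy} :
      Deriv Γ t (.lin (.arr T A)) → Deriv Δ u (.tree T) →
      Deriv (Env.union Γ Δ) (.app t u) (.lin A)
  | many {t : Term} (n : ℕ) (Γs : Fin n → Env) (Gs : Fin n → GenTy)
      (prems : ∀ i, Deriv (Γs i) t (Gs i)) :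
      Deriv (Env.wrap (Env.unionF Γs)) t (.tree (.node (List.ofFn Gs)))
  | none (t : Term) : Deriv Env.empty t (.tree (.node []))

/-- Size of a derivation: number of rules that are not T-many/T-none. -/
def Deriv.size : ∀ {Γ t G}, Deriv Γ t G → ℕ
  | _, _, _, .var _ _ => 1
  | _, _, _, .lam π => π.size + 1
  | _, _, _, .lamStar _ => 1
  | _, _, _, .app π ρ => π.size + ρ.size + 1
  | _, _, _, .many n _ _ prems => ∑ i : Fin n, (prems i).size
  | _, _, _, .none _ => 0

/-- Weight of a weighted derivation, with parameter `X`. -/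
def Deriv.weight (X : ℕ) : ∀ {Γ t G}, Deriv Γ t G → ℕ
  | _, _, _, .var _ A => A.weight X
  | _, _, _, .lam (T := T) (A := A) π => max (π.weight X) (LinTy.weight X (.arr T A))
  | _, _, _, .lamStar _ => 0
  | _, _, _, .app π ρ => max (π.weight X) (ρ.weight X)
  | _, _, _, .many n _ _ prems => X + (Finset.univ.sup fun i => (prems i).weight X)
  | _, _, _, .none _ => 0

/-- `SubD π n π'`: the judgment of `π'` occurs in `π`, crossing `n` T-many rules
descending from it to the root. -/
inductive SubD : ∀ {Γ t G}, Deriv Γ t G → ℕ → ∀ {Γ' u G'}, Deriv Γ' u G' → Prop where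
  | refl {Γ t G} (π : Deriv Γ t G) : SubD π 0 π
  | lam {Γ T t A} {π : Deriv (Env.cons T Γ) t (.lin A)} {n} {Γ' u G'} {π' : Deriv Γ' u G'} :
      SubD π n π' → SubD (Deriv.lam π) n π'
  | appL {Γ Δ t u T A} {π : Deriv Γ t (.lin (.arr T A))} {ρ : Deriv Δ u (.tree T)}
      {n} {Γ' v G'} {π' : Deriv Γ' v G'} :
      SubD π n π' → SubD (Deriv.app π ρ) n π'
  | appR {Γ Δ t u T A} {π : Deriv Γ t (.lin (.arr T A))} {ρ : Deriv Δ u (.tree T)}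
      {n} {Γ' v G'} {π' : Deriv Γ' v G'} :
      SubD ρ n π' → SubD (Deriv.app π ρ) n π'
  | many {t k} {Γs : Fin k → Env} {Gs : Fin k → GenTy} {prems : ∀ i, Deriv (Γs i) t (Gs i)}
      (i : Fin k) {n} {Γ' u G'} {π' : Deriv Γ' u G'} :
      SubD (prems i) n π' → SubD (Deriv.many k Γs Gs prems) (n+1) π'

/-! ## Auxiliary lemmas -/

theorem Term.closedUnder_mono : ∀ {t : Term} {k k' : ℕ}, t.ClosedUnder k → k ≤ k' → t.ClosedUnder k'
  | .var n, k, k', h, hk => by simpa [Term.ClosedUnder] using lt_of_lt_of_le h hk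
  | .lam t, k, k', h, hk => Term.closedUnder_mono (t := t) h (by omega)
  | .app t u, k, k', h, hk => ⟨Term.closedUnder_mono h.1 hk, Term.closedUnder_mono h.2 hk⟩

theorem Term.lift_closed : ∀ {t : Term} {d c : ℕ}, t.ClosedUnder c → Term.lift d c t = t
  | .var n, d, c, h => by simp [Term.lift, Term.ClosedUnder] at h ⊢; omega
  | .lam t, d, c, h => by simp [Term.lift, Term.lift_closed (t := t) h]
  | .app t u, d, c, h => by
      simp [Term.lift, Term.lift_closed (t := t) h.1, Term.lift_closed (t := u) h.2]

def TreeTy.list : TreeTy → List GenTy | .node gs => gs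

@[simp] theorem TreeTy.node_list : ∀ T : TreeTy, TreeTy.node T.list = T
  | .node _ => rfl

@[simp] theorem TreeTy.cat_list : ∀ S T : TreeTy, (S.cat T).list = S.list ++ T.list
  | .node _, .node _ => rfl

theorem TreeTy.leaves_eq (gs : List GenTy) :
    TreeTy.leaves (.node gs) = gs.flatMap GenTy.leaves := by
  rw [TreeTy.leaves]
  simp [List.flatMap]

theorem TreeTy.leaves_cat (S T : TreeTy) :
    (S.cat T).leaves = S.leaves ++ T.leaves := by
  cases S with | node a => cases T with | node b =>
  simp [TreeTy.cat, TreeTy.leaves_eq]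

theorem TreeTy.leaves_wrap : ∀ T : TreeTy, T.wrap.leaves = T.leaves
  | .node [] => rfl
  | .node (g :: gs) => by
      rw [show (TreeTy.node (g :: gs)).wrap = .node [.tree (.node (g :: gs))] from rfl]
      simp [TreeTy.leaves_eq, GenTy.leaves]
/-! ## Environment operations -/

def Env.insertAt (k : ℕ) (T : TreeTy) (Γ : Env) : Env :=
  fun n => if n < k then Γ n else if n = k then T else Γ (n - 1)

def Env.removeAt (k : ℕ) (Δ : Env) : Env :=
  fun n => if n < k then Δ n else Δ (n + 1)

theorem Env.removeAt_insertAt (k : ℕ) (T : TreeTy) (Γ : Env) :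
    Env.removeAt k (Env.insertAt k T Γ) = Γ := by
  funext n
  simp only [Env.removeAt, Env.insertAt]
  split_ifs <;> first | rfl | omega | (congr 1; omega)

theorem Env.insertAt_apply (k : ℕ) (T : TreeTy) (Γ : Env) : Env.insertAt k T Γ k = T := by
  simp [Env.insertAt]

theorem Env.insertAt_self (k : ℕ) (Δ : Env) :
    Env.insertAt k (Δ k) (Env.removeAt k Δ) = Δ := by
  funext n
  simp only [Env.removeAt, Env.insertAt]
  split_ifs <;> first | rfl | omega | (congr 1; omega) | (subst_vars; rfl)

theorem Env.cons_insertAt (k : ℕ) (T T' : TreeTy) (Γ : Env) :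
    Env.cons T' (Env.insertAt k T Γ) = Env.insertAt (k + 1) T (Env.cons T' Γ) := by
  funext n
  cases n with
  | zero => simp [Env.cons, Env.insertAt]
  | succ m =>
      simp only [Env.cons, Env.insertAt, Nat.add_sub_cancel]
      rcases lt_trichotomy m k with h | h | h
      · rw [if_pos h, if_pos (by omega)]
      · subst h; rw [if_neg (by omega), if_pos rfl, if_neg (by omega), if_pos rfl]
      · rw [if_neg (by omega), if_neg (by omega), if_neg (by omega), if_neg (by omega)]
        cases m with
        | zero => omega
        | succ m' => simp [Env.cons]

theorem Env.cons_eq_insertAt (T : TreeTy) (Γ : Env) :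
    Env.cons T Γ = Env.insertAt 0 T Γ := by
  funext n
  cases n <;> simp [Env.cons, Env.insertAt]

theorem Env.removeAt_union (k : ℕ) (Γ Δ : Env) :
    Env.removeAt k (Env.union Γ Δ) = Env.union (Env.removeAt k Γ) (Env.removeAt k Δ) := by
  funext n
  simp only [Env.removeAt, Env.union]
  split_ifs <;> rfl

theorem Env.removeAt_wrap (k : ℕ) (Γ : Env) :
    Env.removeAt k (Env.wrap Γ) = Env.wrap (Env.removeAt k Γ) := by
  funext n
  simp only [Env.removeAt, Env.wrap]
  split_ifs <;> rfl

/-- singleton env decompositions -/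
theorem Env.single_insert_eq (x : ℕ) (A : LinTy) {k T Γ} (h : Env.single x A = Env.insertAt k T Γ)
    (hx : x = k) : T = TreeTy.node [.lin A] ∧ Γ = Env.empty := by
  subst hx
  constructor
  · have := congrFun h x
    simpa [Env.single, Env.insertAt] using this.symm
  · funext n
    have := congrFun h (if n < x then n else n + 1)
    simp only [Env.single, Env.insertAt] at this
    split_ifs at this with h1 h2 h3 h4 h5 <;>
      simp_all [Env.empty, Env.removeAt] <;> omega
theorem Env.single_insert_ne (x : ℕ) (A : LinTy) {k T Γ} (h : Env.single x A = Env.insertAt k T Γ)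
    (hx : x ≠ k) : T = TreeTy.node [] ∧ Γ = Env.single (if x < k then x else x - 1) A := by
  have hΓ : Γ = Env.removeAt k (Env.single x A) := by
    rw [h, Env.removeAt_insertAt]
  constructor
  · have := congrFun h k
    simp only [Env.single, Env.insertAt] at this
    rw [if_neg (fun h' => hx h'.symm), if_pos trivial, if_neg (lt_irrefl k)] at this
    exact this.symm
  · rw [hΓ]; funext n
    simp only [Env.removeAt, Env.single]
    split_ifs <;> first | rfl | omega

/-- `Fin`-indexed concatenation of tree types. -/
def TreeTy.catF {m : ℕ} (Ts : Fin m → TreeTy) : TreeTy :=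
  .node ((List.ofFn fun i => (Ts i).list).flatten)

theorem TreeTy.catF_zero (Ts : Fin 0 → TreeTy) : TreeTy.catF Ts = .node [] := by
  simp [TreeTy.catF]

theorem TreeTy.catF_succ {m : ℕ} (Ts : Fin (m + 1) → TreeTy) :
    TreeTy.catF Ts = (Ts 0).cat (TreeTy.catF (Ts ∘ Fin.succ)) := by
  have : (Ts 0).cat (TreeTy.catF (Ts ∘ Fin.succ)) =
      TreeTy.node ((Ts 0).list ++ (List.ofFn fun i => ((Ts ∘ Fin.succ) i).list).flatten) := by
    rw [show TreeTy.catF (Ts ∘ Fin.succ) = .node ((List.ofFn fun i => ((Ts ∘ Fin.succ) i).list).flatten) from rfl]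
    rw [← TreeTy.node_list (Ts 0)]
    rfl
  rw [this, TreeTy.catF, List.ofFn_succ]
  simp

theorem Env.unionF_apply {m : ℕ} (Γs : Fin m → Env) (x : ℕ) :
    Env.unionF Γs x = TreeTy.catF (fun i => Γs i x) := by
  induction m with
  | zero => simp [Env.unionF, TreeTy.catF_zero, Env.empty]
  | succ m ih =>
      rw [TreeTy.catF_succ]
      show ((List.ofFn Γs).foldr Env.union Env.empty) x = _
      rw [List.ofFn_succ]
      show ((Γs 0).union ((List.ofFn (Γs ∘ Fin.succ)).foldr Env.union Env.empty)) x = _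
      rw [Env.union]
      congr 1
      exact ih (Γs ∘ Fin.succ)

theorem Env.removeAt_unionF {m : ℕ} (k : ℕ) (Γs : Fin m → Env) :
    Env.removeAt k (Env.unionF Γs) = Env.unionF (fun i => Env.removeAt k (Γs i)) := by
  funext n
  simp only [Env.removeAt, Env.unionF_apply]
  split_ifs <;> rfl

/-! ## Derivation casts -/

def Deriv.castE {Γ Γ' : Env} {t : Term} {G G' : GenTy} (hΓ : Γ = Γ') (hG : G = G')
    (π : Deriv Γ t G) : Deriv Γ' t G' := hΓ ▸ hG ▸ π

@[simp] theorem Deriv.size_castE {Γ Γ' t G G'} (hΓ : Γ = Γ') (hG : G = G') (π : Deriv Γ t G) :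
    (π.castE hΓ hG).size = π.size := by
  subst hΓ; subst hG; rfl
theorem TreeTy.wrap_eq_nil : ∀ {T : TreeTy}, T.wrap = .node [] → T = .node []
  | .node [], _ => rfl
  | .node (g :: gs), h => by
      rw [show (TreeTy.node (g :: gs)).wrap = .node [.tree (.node (g :: gs))] from rfl] at h
      simp at h

theorem TreeTy.catF_eq_nil {m : ℕ} {Ts : Fin m → TreeTy} (h : TreeTy.catF Ts = .node [])
    (i : Fin m) : Ts i = .node [] := by
  simp only [TreeTy.catF, TreeTy.node.injEq, List.flatten_eq_nil_iff] at h
  have := h ((Ts i).list) (by simp only [List.mem_ofFn]; exact ⟨i, rfl⟩)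
  rw [← TreeTy.node_list (Ts i), this]

theorem Env.wrap_unionF_empty {m : ℕ} {Γs : Fin m → Env}
    (h : Env.wrap (Env.unionF Γs) = Env.empty) (i : Fin m) : Γs i = Env.empty := by
  funext x
  have hx := congrFun h x
  have h1 : Env.unionF Γs x = .node [] := TreeTy.wrap_eq_nil hx
  rw [Env.unionF_apply] at h1
  exact TreeTy.catF_eq_nil h1 i

/-- Inversion of tree-typed derivations in the empty environment. -/
theorem Deriv.invertAux {Γ' : Env} {u : Term} {G : GenTy} (π : Deriv Γ' u G)
    (gs : List GenTy) (hΓ : Γ' = Env.empty) (hG : G = .tree (.node gs)) :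
    ∃ f : ∀ i : Fin gs.length, Deriv Env.empty u (gs.get i),
      π.size = ∑ i, (f i).size := by
  cases π with
  | var x A => exact absurd hG (by simp)
  | lam π => exact absurd hG (by simp)
  | lamStar t => exact absurd hG (by simp)
  | app π ρ => exact absurd hG (by simp)
  | none t =>
      have hgs : gs = [] := by
        simpa using (TreeTy.node.injEq _ _ ▸ (GenTy.tree.injEq _ _ ▸ hG)).symm
      subst hgs
      exact ⟨fun i => absurd i.isLt (by simp), by simp [Deriv.size]⟩
  | many n Γs Gs prems =>
      have hgs : List.ofFn Gs = gs := by
        simp only [GenTy.tree.injEq, TreeTy.node.injEq] at hG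
        exact hG
      subst hgs
      have hlen : (List.ofFn Gs).length = n := by simp
      have hemp : ∀ i, Γs i = Env.empty := Env.wrap_unionF_empty hΓ
      refine ⟨fun i => Deriv.castE (hemp _) (List.get_ofFn Gs i).symm
        (prems (Fin.cast (by simp) i)), ?_⟩
      show (∑ i, (prems i).size) = _
      simp only [Deriv.size_castE]
      exact (Fintype.sum_equiv (finCongr hlen) _ _ (fun i => rfl)).symm
theorem Env.wrap_unionF_const_empty {m : ℕ} :
    Env.wrap (Env.unionF (fun _ : Fin m => Env.empty)) = Env.empty := by
  funext x
  have h1 : Env.unionF (fun _ : Fin m => Env.empty) x = .node [] := by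
    rw [Env.unionF_apply]
    simp only [TreeTy.catF, TreeTy.node.injEq, List.flatten_eq_nil_iff]
    intro l hl
    simp only [List.mem_ofFn] at hl
    obtain ⟨i, rfl⟩ := hl
    rfl
  show (Env.unionF (fun _ : Fin m => Env.empty) x).wrap = _
  rw [h1]; rfl

/-- Reconstruction of a tree derivation from leaf-sequence derivations. -/
theorem Deriv.join {u : Term} {gs : List GenTy}
    (f : ∀ i : Fin gs.length, Deriv Env.empty u (gs.get i)) :
    ∃ π : Deriv Env.empty u (.tree (.node gs)), π.size = ∑ i, (f i).size := by
  refine ⟨Deriv.castE Env.wrap_unionF_const_empty ?_ (Deriv.many gs.length _ _ f), ?_⟩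
  · rw [List.ofFn_get]
  · simp [Deriv.size_castE]; rfl

theorem Deriv.size_nil {u : Term} (π : Deriv Env.empty u (.tree (.node []))) : π.size = 0 := by
  obtain ⟨f, hf⟩ := π.invertAux [] rfl rfl
  simpa using hf

theorem Deriv.splitCat {u : Term} {T₁ T₂ : TreeTy}
    (π : Deriv Env.empty u (.tree (T₁.cat T₂))) :
    ∃ (π₁ : Deriv Env.empty u (.tree T₁)) (π₂ : Deriv Env.empty u (.tree T₂)),
      π₁.size + π₂.size = π.size := by
  obtain ⟨l₁, rfl⟩ : ∃ l, T₁ = TreeTy.node l := ⟨T₁.list, (TreeTy.node_list T₁).symm⟩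
  obtain ⟨l₂, rfl⟩ : ∃ l, T₂ = TreeTy.node l := ⟨T₂.list, (TreeTy.node_list T₂).symm⟩
  obtain ⟨f, hf⟩ := π.invertAux (l₁ ++ l₂) rfl rfl
  have hlen : (l₁ ++ l₂).length = l₁.length + l₂.length := by simp
  set f' : ∀ i : Fin (l₁.length + l₂.length),
      Deriv Env.empty u ((l₁ ++ l₂).get (Fin.cast hlen.symm i)) :=
    fun i => f (Fin.cast hlen.symm i) with hf'
  have hsum : π.size = ∑ i, (f' i).size := by
    rw [hf]
    exact Fintype.sum_equiv (finCongr hlen) _ _ (fun i => rfl)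
  have h₁ : ∀ i : Fin l₁.length,
      (l₁ ++ l₂).get (Fin.cast hlen.symm (Fin.castAdd l₂.length i)) = l₁.get i := by
    intro i
    simp [List.get_eq_getElem, List.getElem_append_left]
  have h₂ : ∀ i : Fin l₂.length,
      (l₁ ++ l₂).get (Fin.cast hlen.symm (Fin.natAdd l₁.length i)) = l₂.get i := by
    intro i
    simp [List.get_eq_getElem, List.getElem_append_right]
  obtain ⟨π₁, hπ₁⟩ := Deriv.join (fun i => Deriv.castE rfl (h₁ i) (f' (Fin.castAdd l₂.length i)))
  obtain ⟨π₂, hπ₂⟩ := Deriv.join (fun i => Deriv.castE rfl (h₂ i) (f' (Fin.natAdd l₁.length i)))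
  refine ⟨π₁, π₂, ?_⟩
  rw [hπ₁, hπ₂, hsum, Fin.sum_univ_add]
  simp [Deriv.size_castE]

theorem Deriv.splitCatF {u : Term} {m : ℕ} (Ts : Fin m → TreeTy)
    (π : Deriv Env.empty u (.tree (TreeTy.catF Ts))) :
    ∃ f : ∀ i, Deriv Env.empty u (.tree (Ts i)), (∑ i, (f i).size) = π.size := by
  induction m with
  | zero =>
      refine ⟨fun i => i.elim0, ?_⟩
      have := Deriv.size_nil (π.castE rfl (by rw [TreeTy.catF_zero]))
      rw [Deriv.size_castE] at this
      simp [this]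
  | succ m ih =>
      obtain ⟨π₀, πr, hsplit⟩ := Deriv.splitCat (π.castE rfl (by rw [TreeTy.catF_succ]))
      obtain ⟨g, hg⟩ := ih (Ts ∘ Fin.succ) πr
      refine ⟨fun i => Fin.cases π₀ g i, ?_⟩
      rw [Fin.sum_univ_succ]
      simp only [Fin.cases_zero, Fin.cases_succ]
      rw [hg, hsplit, Deriv.size_castE]

theorem Deriv.unwrap {u : Term} {T : TreeTy} (π : Deriv Env.empty u (.tree T.wrap)) :
    ∃ π' : Deriv Env.empty u (.tree T), π'.size = π.size := by
  obtain ⟨gs, rfl⟩ : ∃ l, T = TreeTy.node l := ⟨T.list, (TreeTy.node_list T).symm⟩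
  cases gs with
  | nil => exact ⟨π, rfl⟩
  | cons g gs' =>
      obtain ⟨f, hf⟩ := π.invertAux [.tree (.node (g :: gs'))] rfl rfl
      exact ⟨f ⟨0, by simp⟩, by rw [hf]; simp [Fin.sum_univ_one]⟩
theorem TreeTy.leaves_catF {m : ℕ} (Ts : Fin m → TreeTy) :
    (TreeTy.catF Ts).leaves.length = ∑ i, (Ts i).leaves.length := by
  induction m with
  | zero => simp [TreeTy.catF_zero, TreeTy.leaves_eq]
  | succ m ih =>
      rw [TreeTy.catF_succ, TreeTy.leaves_cat, List.length_append, Fin.sum_univ_succ, ih]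
      rfl

theorem Env.removeAt_empty (k : ℕ) : Env.removeAt k Env.empty = Env.empty := by
  funext n; simp only [Env.removeAt]; split_ifs <;> rfl

theorem Deriv.substKey {u : Term} (hu : u.Closed) :
    ∀ {Δ : Env} {t : Term} {G : GenTy} (π : Deriv Δ t G) {k : ℕ} {T : TreeTy} {Γ : Env},
      Δ = Env.insertAt k T Γ → ∀ πu : Deriv Env.empty u (.tree T),
      ∃ π' : Deriv Γ (Term.subst u k t) G,
        π'.size + T.leaves.length = π.size + πu.size := by
  intro Δ t G π
  induction π with
  | var x A =>
      intro k T Γ h πu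
      rcases eq_or_ne x k with hx | hx
      · obtain ⟨hT, hΓ⟩ := Env.single_insert_eq x A h hx
        subst hT; subst hΓ; subst hx
        obtain ⟨f, hf⟩ := πu.invertAux [.lin A] rfl rfl
        rw [show Term.subst u x (.var x) = u by
          simp [Term.subst, Term.lift_closed hu]]
        refine ⟨f ⟨0, by simp⟩, ?_⟩
        rw [hf]
        simp [TreeTy.leaves_eq, GenTy.leaves, Fin.sum_univ_one, Deriv.size, Nat.add_comm]
      · obtain ⟨hT, hΓ⟩ := Env.single_insert_ne x A h hx
        subst hT; subst hΓ
        have hsz : πu.size = 0 := Deriv.size_nil πu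
        rw [show Term.subst u k (.var x) =
              .var (if x < k then x else x - 1) by
            simp only [Term.subst]
            split_ifs <;> first | rfl | omega]
        exact ⟨Deriv.var _ A, by simp [TreeTy.leaves_eq, hsz, Deriv.size]⟩
  | lam π ih =>
      intro k T Γ h πu
      rename_i Γ₀ T' t' A
      subst h
      obtain ⟨π₁, hπ₁⟩ := ih (Env.cons_insertAt k T T' Γ) πu
      exact ⟨Deriv.lam π₁, by simp only [Deriv.size]; omega⟩
  | lamStar t' =>
      intro k T Γ h πu
      have hT : T = .node [] := by
        have := congrFun h k
        simpa [Env.insertAt, Env.empty] using this.symm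
      have hΓ : Γ = Env.empty := by
        rw [← Env.removeAt_insertAt k T Γ, ← h, Env.removeAt_empty]
      subst hT; subst hΓ
      have hsz : πu.size = 0 := Deriv.size_nil πu
      exact ⟨Deriv.lamStar _, by simp [TreeTy.leaves_eq, hsz, Deriv.size]⟩
  | app π ρ ihπ ihρ =>
      intro k T Γ h πu
      rename_i Γ₁ Γ₂ t₁ t₂ T' A
      have hT : T = (Γ₁ k).cat (Γ₂ k) := by
        have := congrFun h k
        rw [Env.insertAt_apply] at this
        exact this.symm
      subst hT
      obtain ⟨πu₁, πu₂, hsplit⟩ := Deriv.splitCat πu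
      obtain ⟨π₁, hπ₁⟩ := ihπ (Env.insertAt_self k Γ₁).symm πu₁
      obtain ⟨π₂, hπ₂⟩ := ihρ (Env.insertAt_self k Γ₂).symm πu₂
      have hΓ : Env.union (Env.removeAt k Γ₁) (Env.removeAt k Γ₂) = Γ := by
        rw [← Env.removeAt_union, h, Env.removeAt_insertAt]
      refine ⟨Deriv.castE hΓ rfl (Deriv.app π₁ π₂), ?_⟩
      have e := Deriv.size_castE (t := Term.subst u k (.app t₁ t₂)) hΓ rfl (Deriv.app π₁ π₂)
      have hl : ((Γ₁ k).cat (Γ₂ k)).leaves.length = (Γ₁ k).leaves.length + (Γ₂ k).leaves.length := by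
        rw [TreeTy.leaves_cat, List.length_append]
      have hs : Deriv.size (t := Term.subst u k (.app t₁ t₂)) (Deriv.app π₁ π₂) = π₁.size + π₂.size + 1 := rfl
      have hs' : (Deriv.app π ρ).size = π.size + ρ.size + 1 := rfl
      omega
  | many n Γs Gs prems ih =>
      intro k T Γ h πu
      rename_i t'
      have hT : T = (TreeTy.catF fun i => Γs i k).wrap := by
        have := congrFun h k
        rw [Env.insertAt_apply] at this
        rw [← this]
        show (Env.unionF Γs k).wrap = _
        rw [Env.unionF_apply]
      subst hT
      obtain ⟨πu', hπu'⟩ := Deriv.unwrap πu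
      obtain ⟨fu, hfu⟩ := Deriv.splitCatF _ πu'
      have H := fun i => ih i (Env.insertAt_self k (Γs i)).symm (fu i)
      choose π' hπ' using H
      have hΓ : Env.wrap (Env.unionF fun i => Env.removeAt k (Γs i)) = Γ := by
        rw [← Env.removeAt_unionF, ← Env.removeAt_wrap, h, Env.removeAt_insertAt]
      refine ⟨Deriv.castE hΓ rfl (Deriv.many n _ Gs π'), ?_⟩
      rw [Deriv.size_castE, TreeTy.leaves_wrap, TreeTy.leaves_catF]
      show (∑ i, (π' i).size) + _ = (∑ i, (prems i).size) + _
      have hsum : (∑ i, (π' i).size) + (∑ i, ((Γs i k).leaves.length)) =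
          (∑ i, (prems i).size) + (∑ i, (fu i).size) := by
        rw [← Finset.sum_add_distrib, ← Finset.sum_add_distrib]
        exact Finset.sum_congr rfl fun i _ => hπ' i
      omega
  | none t' =>
      intro k T Γ h πu
      have hT : T = .node [] := by
        have := congrFun h k
        simpa [Env.insertAt, Env.empty] using this.symm
      have hΓ : Γ = Env.empty := by
        rw [← Env.removeAt_insertAt k T Γ, ← h, Env.removeAt_empty]
      subst hT; subst hΓ
      have hsz : πu.size = 0 := Deriv.size_nil πu
      exact ⟨Deriv.none _, by simp [TreeTy.leaves_eq, hsz, Deriv.size]⟩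

theorem quantitative_substitution' {Γ : Env} {T : TreeTy} {t u : Term} {G : GenTy}
    (πt : Deriv (Env.cons T Γ) t G) (πu : Deriv Env.empty u (.tree T)) (hu : u.Closed) :
    ∃ π : Deriv Γ (t.subst0 u) G, π.size + T.leaves.length = πt.size + πu.size :=
  Deriv.substKey hu πt (Env.cons_eq_insertAt T Γ) πu
/-- quantitative substitution. From `Γ, x:T ⊢ t : G` (derivation `πt`)
and `⊢ u : T` (derivation `πu`, `u` closed) one gets `Γ ⊢ t{x := u} : G` with a
derivation of size `|πt| + |πu| − length (leaves T)`. -/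
theorem quantitative_substitution {Γ : Env} {T : TreeTy} {t u : Term} {G : GenTy}
    (πt : Deriv (Env.cons T Γ) t G) (πu : Deriv Env.empty u (.tree T)) (hu : u.Closed) :
    ∃ π : Deriv Γ (t.subst0 u) G, π.size + T.leaves.length = πt.size + πu.size := by
  exact quantitative_substitution' πt πu hu
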